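/- arXiv:1910.04380 — 3 statements merged into one kernel-verified Lean document; each statement's English description precedes it below -/
import Mathlib

section
/- Let G act on a countably infinite set X and H act on a countably infinite set Y, and let G × H act naturally on the disjoint union X ⊔ Y. Then for every n, f_{G×H}(n) ≤ (n+1)·f_G(n)·f_H(n), where f denotes the number of orbits on n-element subsets. -/
universe u

/-- The number of orbits of `G` on `n`-element subsets of `X` (as a cardinal). -/
noncomputable def orbitCountC (G : Type*) [Group G] (X : Type u) [MulAction G X] (n : ℕ) :
    Cardinal.{u} :=
  letI := Classical.decEq X
  Cardinal.mk (Quot fun s t : {s : Finset X // s.card = n} =>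
    ∃ g : G, (Finset.image (fun x => g • x) s.1) = t.1)

section SumAction

variable (G H : Type*) (X Y : Type u) [Group G] [Group H] [MulAction G X] [MulAction H Y]

/-- The natural action of `G × H` on the disjoint union `X ⊔ Y`. -/
instance sumSMul : SMul (G × H) (X ⊕ Y) :=
  ⟨fun p z => z.map (fun x => p.1 • x) (fun y => p.2 • y)⟩

instance sumMulAction : MulAction (G × H) (X ⊕ Y) where
  one_smul z := by
    cases z with
    | inl x => show Sum.inl ((1 : G) • x) = Sum.inl x; rw [one_smul]
    | inr y => show Sum.inr ((1 : H) • y) = Sum.inr y; rw [one_smul]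
  mul_smul p q z := by
    cases z with
    | inl x => show Sum.inl ((p.1 * q.1) • x) = Sum.inl (p.1 • q.1 • x); rw [mul_smul]
    | inr y => show Sum.inr ((p.2 * q.2) • y) = Sum.inr (p.2 • q.2 • y); rw [mul_smul]

end SumAction


open Finset in
/-- If the sums of `g` over all `k`-subsets of every `n`-subset of `U` vanish, then they also
vanish over `k`-subsets of every `(n+1)`-subset of `U`. -/
theorem vanish_extend {X : Type u} {k n : ℕ} (hkn : k ≤ n) {U : Set X} {g : Finset X → ℚ}
    (hg : ∀ B : Finset X, ↑B ⊆ U → B.card = n → ∑ A ∈ B.powersetCard k, g A = 0)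
    (M : Finset X) (hM : ↑M ⊆ U) (hMcard : M.card = n + 1) :
    ∑ A ∈ M.powersetCard k, g A = 0 := by
  classical
  have h1 : ∀ x ∈ M, ∑ A ∈ (M.erase x).powersetCard k, g A = 0 := by
    intro x hx
    exact hg _ (Set.Subset.trans (by exact_mod_cast coe_subset.mpr (erase_subset x M)) hM)
      (by rw [card_erase_of_mem hx, hMcard]; omega)
  have h2 : ∀ x : X, (M.erase x).powersetCard k = (M.powersetCard k).filter (fun A => x ∉ A) := by
    intro x
    ext A
    simp only [mem_powersetCard, mem_filter, subset_erase]
    tauto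
  have h3 : (0 : ℚ) = ∑ x ∈ M, ∑ A ∈ (M.erase x).powersetCard k, g A := by
    rw [Finset.sum_congr rfl h1, Finset.sum_const, smul_zero]
  have h4 : ∑ x ∈ M, ∑ A ∈ (M.erase x).powersetCard k, g A
      = ∑ A ∈ M.powersetCard k, ((n + 1 - k : ℕ) : ℚ) * g A := by
    calc ∑ x ∈ M, ∑ A ∈ (M.erase x).powersetCard k, g A
        = ∑ x ∈ M, ∑ A ∈ M.powersetCard k, if x ∉ A then g A else 0 := by
          refine Finset.sum_congr rfl fun x _ => ?_
          rw [h2 x, Finset.sum_filter]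
      _ = ∑ A ∈ M.powersetCard k, ∑ x ∈ M, if x ∉ A then g A else 0 := Finset.sum_comm
      _ = ∑ A ∈ M.powersetCard k, ((n + 1 - k : ℕ) : ℚ) * g A := by
          refine Finset.sum_congr rfl fun A hA => ?_
          rw [← Finset.sum_filter, Finset.sum_const, ← Finset.sdiff_eq_filter]
          rw [mem_powersetCard] at hA
          rw [Finset.card_sdiff_of_subset hA.1, hA.2, hMcard, nsmul_eq_mul]
  have h5 : ((n + 1 - k : ℕ) : ℚ) * ∑ A ∈ M.powersetCard k, g A = 0 := by
    rw [Finset.mul_sum]; rw [h4] at h3; exact h3.symm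
  rcases mul_eq_zero.mp h5 with h | h
  · exfalso
    have : n + 1 - k ≠ 0 := by omega
    exact this (by exact_mod_cast h)
  · exact h

open Finset in
/-- Key combinatorial lemma: over an infinite ground set, a function on `k`-sets whose sums
over the `k`-subsets of every `n`-set vanish is identically zero (on `k`-sets). -/
theorem vanish_main (k : ℕ) : ∀ n : ℕ, k ≤ n → ∀ {X : Type u} (U : Set X), U.Infinite →
    ∀ (g : Finset X → ℚ),
    (∀ B : Finset X, ↑B ⊆ U → B.card = n → ∑ A ∈ B.powersetCard k, g A = 0) →
    ∀ A : Finset X, ↑A ⊆ U → A.card = k → g A = 0 := by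
  induction k with
  | zero =>
    intro n _ X U hU g hg A hAU hA
    rw [Finset.card_eq_zero] at hA
    subst hA
    obtain ⟨B, hBU, hBcard⟩ := hU.exists_subset_card_eq n
    have := hg B hBU hBcard
    rwa [Finset.powersetCard_zero, Finset.sum_singleton] at this
  | succ k ih =>
    intro n hn X U hU g hg A hAU hA
    classical
    have hApos : A.Nonempty := Finset.card_pos.mp (by omega)
    obtain ⟨a, ha⟩ := hApos
    have haU : a ∈ U := hAU ha
    set U' : Set X := U \ {a} with hU'def
    have hU' : U'.Infinite := hU.diff (Set.finite_singleton a)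
    set g' : Finset X → ℚ := fun E => g (insert a E) with hg'def
    have hg' : ∀ B' : Finset X, ↑B' ⊆ U' → B'.card = n →
        ∑ E ∈ B'.powersetCard k, g' E = 0 := by
      intro B' hB'U hB'card
      have haB' : a ∉ B' := fun h => (hB'U h).2 rfl
      have hBU : ↑(insert a B') ⊆ U := by
        intro x hx
        simp only [Finset.coe_insert, Set.mem_insert_iff] at hx
        rcases hx with rfl | hx
        · exact haU
        · exact (hB'U hx).1
      have hsum := vanish_extend hn hg
        (insert a B') hBU (by rw [Finset.card_insert_of_notMem haB', hB'card])
      rw [Finset.powersetCard_succ_insert haB' k] at hsum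
      have hdisj : Disjoint (B'.powersetCard (k + 1))
          ((B'.powersetCard k).image (insert a)) := by
        rw [Finset.disjoint_left]
        intro A' hA1 hA2
        rw [Finset.mem_powersetCard] at hA1
        obtain ⟨E, _, rfl⟩ := Finset.mem_image.mp hA2
        exact haB' (hA1.1 (Finset.mem_insert_self a E))
      rw [Finset.sum_union hdisj] at hsum
      have hfirst : ∑ A' ∈ B'.powersetCard (k + 1), g A' = 0 := hg B'
        (Set.Subset.trans (fun x hx => hx) (Set.Subset.trans (fun x hx => hB'U hx) (fun x hx => hx.1))) hB'card
      have himg : ∑ A' ∈ (B'.powersetCard k).image (insert a), g A'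
          = ∑ E ∈ B'.powersetCard k, g' E := by
        refine Finset.sum_image fun E1 h1 E2 h2 hins => ?_
        rw [Finset.mem_coe, Finset.mem_powersetCard] at h1 h2
        have ha1 : a ∉ E1 := fun h => haB' (h1.1 h)
        have ha2 : a ∉ E2 := fun h => haB' (h2.1 h)
        rw [← Finset.erase_insert ha1, ← Finset.erase_insert ha2, hins]
      rw [hfirst, himg, zero_add] at hsum
      exact hsum
    have hAerase : ↑(A.erase a) ⊆ U' := by
      intro x hx
      simp only [Finset.coe_erase, Set.mem_diff, Set.mem_singleton_iff] at hx ⊢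
      exact ⟨hAU hx.1, hx.2⟩
    have := ih n (by omega) U' hU' g' hg' (A.erase a) hAerase
      (by rw [Finset.card_erase_of_mem ha, hA]; omega)
    have h2 : g (insert a (A.erase a)) = 0 := this
    rwa [Finset.insert_erase ha] at h2
section OrbitMachinery

variable (G : Type*) [Group G] (X : Type u) [MulAction G X]

/-- The orbit relation on `n`-element subsets. -/
def oRel (n : ℕ) (s t : {s : Finset X // s.card = n}) : Prop :=
  letI := Classical.decEq X
  ∃ g : G, (Finset.image (fun x => g • x) s.1) = t.1

theorem orbitCountC_eq (n : ℕ) : orbitCountC G X n = Cardinal.mk (Quot (oRel G X n)) := rfl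

theorem oRel_equiv (n : ℕ) : Equivalence (oRel G X n) := by
  letI := Classical.decEq X
  constructor
  · intro s
    exact ⟨1, by simp [one_smul]⟩
  · rintro s t ⟨g, hg⟩
    refine ⟨g⁻¹, ?_⟩
    rw [← hg, Finset.image_image]
    ext x
    simp [Function.comp, inv_smul_smul]
  · rintro s t w ⟨g1, h1⟩ ⟨g2, h2⟩
    refine ⟨g2 * g1, ?_⟩
    rw [← h2, ← h1, Finset.image_image]
    ext x
    simp [Function.comp, mul_smul]

theorem oRel_mk_eq_iff (n : ℕ) {s t : {s : Finset X // s.card = n}} :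
    Quot.mk (oRel G X n) s = Quot.mk (oRel G X n) t ↔ oRel G X n s t := by
  rw [Quot.eq, (oRel_equiv G X n).eqvGen_iff]

/-- Monotonicity: for `k ≤ n` and `X` countably infinite, the number of orbits on `k`-subsets
is at most the number of orbits on `n`-subsets. -/
theorem orbitCountC_mono [Countable X] [Infinite X] {k n : ℕ} (hkn : k ≤ n) :
    orbitCountC G X k ≤ orbitCountC G X n := by
  letI := Classical.decEq X
  rw [orbitCountC_eq, orbitCountC_eq]
  rcases lt_or_ge (Cardinal.mk (Quot (oRel G X n))) Cardinal.aleph0 with hfin | hinf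
  · -- finite case: linear algebra
    have hFin : Finite (Quot (oRel G X n)) := Cardinal.lt_aleph0_iff_finite.mp hfin
    letI := Fintype.ofFinite (Quot (oRel G X n))
    set κ := Quot (oRel G X k)
    set ν := Quot (oRel G X n)
    -- the function induced by a finitely supported function on k-orbits
    set gfun : (κ →₀ ℚ) → Finset X → ℚ := fun a A =>
      if h : A.card = k then a (Quot.mk _ ⟨A, h⟩) else 0 with hgfun
    have hgfun_smul : ∀ (a : κ →₀ ℚ) (g : G) (A : Finset X),
        gfun a (Finset.image (fun x => g • x) A) = gfun a A := by
      intro a g A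
      have hcard : (Finset.image (fun x => g • x) A).card = A.card :=
        Finset.card_image_of_injective A (MulAction.injective g)
      by_cases h : A.card = k
      · rw [hgfun]
        simp only []
        rw [dif_pos (hcard.trans h), dif_pos h]
        congr 1
        exact (Quot.sound ⟨g, rfl⟩).symm
      · rw [hgfun]; simp only []
        rw [dif_neg (fun hh => h (hcard.symm.trans hh)), dif_neg h]
    have hval_resp : ∀ (a : κ →₀ ℚ) (s t : {s : Finset X // s.card = n}), oRel G X n s t →
        ∑ A ∈ s.1.powersetCard k, gfun a A = ∑ A ∈ t.1.powersetCard k, gfun a A := by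
      intro a s t ⟨g, hg⟩
      refine Finset.sum_nbij' (fun A => Finset.image (fun x => g • x) A)
        (fun A => Finset.image (fun x => g⁻¹ • x) A) ?_ ?_ ?_ ?_ ?_
      · intro A hA
        rw [Finset.mem_powersetCard] at hA ⊢
        constructor
        · rw [← hg]; exact Finset.image_subset_image hA.1
        · rw [Finset.card_image_of_injective A (MulAction.injective g)]; exact hA.2
      · intro A hA
        rw [Finset.mem_powersetCard] at hA ⊢
        constructor
        · rw [← hg] at hA
          intro x hx
          obtain ⟨y, hy, rfl⟩ := Finset.mem_image.mp hx
          obtain ⟨z, hz, rfl⟩ := Finset.mem_image.mp (hA.1 hy)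
          simpa using hz
        · rw [Finset.card_image_of_injective A (MulAction.injective g⁻¹)]; exact hA.2
      · intro A _
        show Finset.image _ (Finset.image _ A) = A
        rw [Finset.image_image]
        ext x
        simp [Function.comp, inv_smul_smul]
      · intro A _
        show Finset.image _ (Finset.image _ A) = A
        rw [Finset.image_image]
        ext x
        simp [Function.comp, smul_inv_smul]
      · intro A _
        exact (hgfun_smul a g A).symm
    set T : (κ →₀ ℚ) →ₗ[ℚ] (ν → ℚ) :=
      { toFun := fun a => Quot.lift (fun s => ∑ A ∈ s.1.powersetCard k, gfun a A) (hval_resp a)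
        map_add' := by
          intro a b
          funext o
          induction o using Quot.ind with
          | mk s =>
            show (∑ A ∈ s.1.powersetCard k, gfun (a + b) A) = _
            have : ∀ A : Finset X, gfun (a + b) A = gfun a A + gfun b A := by
              intro A
              rw [hgfun]; simp only []
              split
              · simp [Finsupp.add_apply]
              · simp
            rw [Finset.sum_congr rfl fun A _ => this A, Finset.sum_add_distrib]
            rfl
        map_smul' := by
          intro c a
          funext o
          induction o using Quot.ind with
          | mk s =>
            show (∑ A ∈ s.1.powersetCard k, gfun (c • a) A) = _
            have : ∀ A : Finset X, gfun (c • a) A = c * gfun a A := by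
              intro A
              rw [hgfun]; simp only []
              split
              · simp [Finsupp.smul_apply]
              · simp
            rw [Finset.sum_congr rfl fun A _ => this A, ← Finset.mul_sum]
            rfl } with hT
    have hTinj : Function.Injective T := by
      rw [injective_iff_map_eq_zero]
      intro a ha
      have hzero : ∀ B : Finset X, (B : Set X) ⊆ Set.univ → B.card = n →
          ∑ A ∈ B.powersetCard k, gfun a A = 0 := by
        intro B _ hB
        have := congrFun ha (Quot.mk _ (⟨B, hB⟩ : {s : Finset X // s.card = n}))
        exact this
      have hA0 : ∀ A : Finset X, A.card = k → gfun a A = 0 := by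
        intro A hA
        exact vanish_main k n hkn Set.univ Set.infinite_univ (gfun a) hzero A
          (Set.subset_univ _) hA
      ext o
      induction o using Quot.ind with
      | mk s =>
        have := hA0 s.1 s.2
        rw [hgfun] at this
        simp only [dif_pos s.2] at this
        simpa using this
    calc Cardinal.mk κ = Module.rank ℚ (κ →₀ ℚ) := by
          rw [rank_finsupp_self, Cardinal.lift_uzero]
      _ ≤ Module.rank ℚ (ν → ℚ) := LinearMap.rank_le_of_injective T hTinj
      _ = Fintype.card ν := rank_fun'
      _ = Cardinal.mk ν := (Cardinal.mk_fintype ν).symm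
  · exact le_trans Cardinal.mk_le_aleph0 hinf

end OrbitMachinery
section MainProof

variable (G H : Type*) (X Y : Type u) [Group G] [Group H] [MulAction G X] [MulAction H Y]

theorem toLeft_smul (p : G × H) (S : Finset (X ⊕ Y)) :
    letI := Classical.decEq X
    letI := Classical.decEq (X ⊕ Y)
    (Finset.image (fun z => p • z) S).toLeft = Finset.image (fun x => p.1 • x) S.toLeft := by
  letI := Classical.decEq X
  letI := Classical.decEq (X ⊕ Y)
  ext x
  simp only [Finset.mem_toLeft, Finset.mem_image]
  constructor
  · rintro ⟨z, hz, hzeq⟩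
    cases z with
    | inl x' =>
      exact ⟨x', hz, Sum.inl.inj hzeq⟩
    | inr y' =>
      have : Sum.inr (p.2 • y') = Sum.inl x := hzeq
      simp at this
  · rintro ⟨x', hx', rfl⟩
    exact ⟨Sum.inl x', hx', rfl⟩

theorem toRight_smul (p : G × H) (S : Finset (X ⊕ Y)) :
    letI := Classical.decEq Y
    letI := Classical.decEq (X ⊕ Y)
    (Finset.image (fun z => p • z) S).toRight = Finset.image (fun y => p.2 • y) S.toRight := by
  letI := Classical.decEq Y
  letI := Classical.decEq (X ⊕ Y)
  ext y
  simp only [Finset.mem_toRight, Finset.mem_image]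
  constructor
  · rintro ⟨z, hz, hzeq⟩
    cases z with
    | inl x' =>
      have : Sum.inl (p.1 • x') = Sum.inr y := hzeq
      simp at this
    | inr y' =>
      exact ⟨y', hz, Sum.inr.inj hzeq⟩
  · rintro ⟨y', hy', rfl⟩
    exact ⟨Sum.inr y', hy', rfl⟩

theorem finset_sum_ext {S T : Finset (X ⊕ Y)} (h1 : S.toLeft = T.toLeft)
    (h2 : S.toRight = T.toRight) : S = T := by
  ext z
  cases z with
  | inl x => rw [← Finset.mem_toLeft, ← Finset.mem_toLeft, h1]
  | inr y => rw [← Finset.mem_toRight, ← Finset.mem_toRight, h2]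

end MainProof

/-- Let `G` act on a countably infinite set `X` and `H` act on a countably
infinite set `Y`, and let `G × H` act naturally on the disjoint union `X ⊔ Y`.  Then for
every `n`, `f_{G×H}(n) ≤ (n+1) · f_G(n) · f_H(n)`, where `f` denotes the number of
orbits on `n`-element subsets. -/
theorem stmt3 (G H : Type*) (X Y : Type u) [Group G] [Group H] [MulAction G X]
    [MulAction H Y] [Countable X] [Infinite X] [Countable Y] [Infinite Y] (n : ℕ) :
    orbitCountC (G × H) (X ⊕ Y) n ≤
      ((n : Cardinal.{u}) + 1) * orbitCountC G X n * orbitCountC H Y n := by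
  letI := Classical.decEq X
  letI := Classical.decEq Y
  letI := Classical.decEq (X ⊕ Y)
  -- embeddings from k-orbits into n-orbits, from monotonicity
  have keyX : ∀ i : Fin (n + 1), Cardinal.mk (Quot (oRel G X i.1)) ≤
      Cardinal.mk (Quot (oRel G X n)) := by
    intro i
    rw [← orbitCountC_eq, ← orbitCountC_eq]
    exact orbitCountC_mono G X (Nat.lt_succ_iff.mp i.2)
  have keyY : ∀ i : Fin (n + 1), Cardinal.mk (Quot (oRel H Y (n - i.1))) ≤
      Cardinal.mk (Quot (oRel H Y n)) := by
    intro i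
    rw [← orbitCountC_eq, ← orbitCountC_eq]
    exact orbitCountC_mono H Y (Nat.sub_le n i.1)
  set u : ∀ i : Fin (n + 1), Quot (oRel G X i.1) ↪ Quot (oRel G X n) :=
    fun i => ((Cardinal.le_def _ _).mp (keyX i)).some with hudef
  set v : ∀ i : Fin (n + 1), Quot (oRel H Y (n - i.1)) ↪ Quot (oRel H Y n) :=
    fun i => ((Cardinal.le_def _ _).mp (keyY i)).some with hvdef
  -- congruence helpers
  have ucong : ∀ (i i' : ℕ) (hi : i < n + 1) (hi' : i' < n + 1) (A A' : Finset X)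
      (hA : A.card = i) (hA' : A'.card = i') (g : G),
      Finset.image (fun x => g • x) A = A' →
      u ⟨i, hi⟩ (Quot.mk _ ⟨A, hA⟩) = u ⟨i', hi'⟩ (Quot.mk _ ⟨A', hA'⟩) := by
    intro i i' hi hi' A A' hA hA' g him
    have hii : i = i' := by
      rw [← hA, ← hA', ← him, Finset.card_image_of_injective A (MulAction.injective g)]
    subst hii
    exact congrArg _ (Quot.sound ⟨g, him⟩)
  have vcong : ∀ (i i' : ℕ) (hi : i < n + 1) (hi' : i' < n + 1) (B B' : Finset Y)
      (hB : B.card = n - i) (hB' : B'.card = n - i') (h : H), i = i' →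
      Finset.image (fun y => h • y) B = B' →
      v ⟨i, hi⟩ (Quot.mk _ ⟨B, hB⟩) = v ⟨i', hi'⟩ (Quot.mk _ ⟨B', hB'⟩) := by
    intro i i' hi hi' B B' hB hB' h hii him
    subst hii
    exact congrArg _ (Quot.sound ⟨h, him⟩)
  have uinj : ∀ (i i' : ℕ) (hi : i < n + 1) (hi' : i' < n + 1) (A A' : Finset X)
      (hA : A.card = i) (hA' : A'.card = i'), i = i' →
      u ⟨i, hi⟩ (Quot.mk _ ⟨A, hA⟩) = u ⟨i', hi'⟩ (Quot.mk _ ⟨A', hA'⟩) →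
      ∃ g : G, Finset.image (fun x => g • x) A = A' := by
    intro i i' hi hi' A A' hA hA' hii he
    subst hii
    have h2 : Quot.mk (oRel G X i) ⟨A, hA⟩ = Quot.mk (oRel G X i) ⟨A', hA'⟩ :=
      (u ⟨i, hi⟩).injective (by exact he)
    rw [oRel_mk_eq_iff] at h2
    exact h2
  have vinj : ∀ (i i' : ℕ) (hi : i < n + 1) (hi' : i' < n + 1) (B B' : Finset Y)
      (hB : B.card = n - i) (hB' : B'.card = n - i'), i = i' →
      v ⟨i, hi⟩ (Quot.mk _ ⟨B, hB⟩) = v ⟨i', hi'⟩ (Quot.mk _ ⟨B', hB'⟩) →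
      ∃ h : H, Finset.image (fun y => h • y) B = B' := by
    intro i i' hi hi' B B' hB hB' hii he
    subst hii
    have h2 : Quot.mk (oRel H Y (n - i)) ⟨B, hB⟩ = Quot.mk (oRel H Y (n - i)) ⟨B', hB'⟩ :=
      (v ⟨i, hi⟩).injective (by exact he)
    rw [oRel_mk_eq_iff] at h2
    exact h2
  -- the map
  have hcards : ∀ S : {s : Finset (X ⊕ Y) // s.card = n},
      S.1.toLeft.card < n + 1 ∧ S.1.toRight.card = n - S.1.toLeft.card := by
    intro S
    have h := Finset.card_toLeft_add_card_toRight (u := S.1)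
    rw [S.2] at h
    omega
  set φ : {s : Finset (X ⊕ Y) // s.card = n} →
      ULift.{u} (Fin (n + 1)) × Quot (oRel G X n) × Quot (oRel H Y n) :=
    fun S => ⟨⟨⟨S.1.toLeft.card, (hcards S).1⟩⟩,
      u ⟨S.1.toLeft.card, (hcards S).1⟩ (Quot.mk _ ⟨S.1.toLeft, rfl⟩),
      v ⟨S.1.toLeft.card, (hcards S).1⟩ (Quot.mk _ ⟨S.1.toRight, (hcards S).2⟩)⟩ with hφdef
  have hresp : ∀ S T : {s : Finset (X ⊕ Y) // s.card = n},
      oRel (G × H) (X ⊕ Y) n S T → φ S = φ T := by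
    rintro S T ⟨p, hp⟩
    have hL : Finset.image (fun x => p.1 • x) S.1.toLeft = T.1.toLeft := by
      rw [← hp, toLeft_smul]
    have hR : Finset.image (fun y => p.2 • y) S.1.toRight = T.1.toRight := by
      rw [← hp, toRight_smul]
    have hc : S.1.toLeft.card = T.1.toLeft.card := by
      rw [← hL, Finset.card_image_of_injective _ (MulAction.injective p.1)]
    rw [hφdef]
    refine Prod.ext (congrArg ULift.up (Fin.ext hc)) (Prod.ext ?_ ?_)
    · exact ucong _ _ _ _ _ _ _ _ p.1 hL
    · exact vcong _ _ _ _ _ _ _ _ p.2 hc hR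
  set F : Quot (oRel (G × H) (X ⊕ Y) n) →
      ULift.{u} (Fin (n + 1)) × Quot (oRel G X n) × Quot (oRel H Y n) :=
    Quot.lift φ hresp with hFdef
  have hFinj : Function.Injective F := by
    intro q q'
    induction q using Quot.ind with
    | mk S =>
      induction q' using Quot.ind with
      | mk T =>
        intro he
        have he' : φ S = φ T := he
        rw [hφdef] at he'
        have h1 := congrArg Prod.fst he'
        have h2 := congrArg (fun z => z.2.1) he'
        have h3 := congrArg (fun z => z.2.2) he'
        simp only [] at h1 h2 h3
        have hc : S.1.toLeft.card = T.1.toLeft.card := by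
          have := congrArg (fun z => z.down.1) h1
          simpa using this
        obtain ⟨g, hg⟩ := uinj _ _ _ _ _ _ _ _ hc h2
        obtain ⟨h, hh⟩ := vinj _ _ _ _ _ _ _ _ hc h3
        apply Quot.sound
        refine ⟨(g, h), ?_⟩
        apply finset_sum_ext X Y
        · rw [toLeft_smul]; exact hg
        · rw [toRight_smul]; exact hh
  calc orbitCountC (G × H) (X ⊕ Y) n
      = Cardinal.mk (Quot (oRel (G × H) (X ⊕ Y) n)) := orbitCountC_eq _ _ n
    _ ≤ Cardinal.mk (ULift.{u} (Fin (n + 1)) × Quot (oRel G X n) × Quot (oRel H Y n)) :=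
        Cardinal.mk_le_of_injective hFinj
    _ = ((n : Cardinal.{u}) + 1) * (orbitCountC G X n * orbitCountC H Y n) := by
        rw [Cardinal.mk_prod, Cardinal.mk_prod, Cardinal.mk_uLift,
          Cardinal.mk_fintype (Fin (n + 1))]
        simp [Cardinal.lift_id, Cardinal.lift_natCast, orbitCountC_eq]
    _ = ((n : Cardinal.{u}) + 1) * orbitCountC G X n * orbitCountC H Y n := by
        rw [mul_assoc]
end

section
/- For every k ≥ 1, lim_{n→∞} F_{n,k}^{1/n} exists and equals the reciprocal of the smallest positive real root of the polynomial 1 - x - x² - … - x^k. -/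
/-- The generalized Fibonacci numbers of order `k`:
`F_{n,k} = Σ_{i=1}^{k} F_{n-i,k}`, with `F_{n,k} = 0` for `n < 0` and `F_{0,k} = 1`. -/
def genFib (k : ℕ) : ℕ → ℕ
  | 0 => 1
  | (n + 1) => ∑ i ∈ Finset.range k, if i ≤ n then genFib k (n - i) else 0
decreasing_by
  exact Nat.lt_succ_of_le (Nat.sub_le n i)

/-- For every `k ≥ 1`, `lim_{n→∞} F_{n,k}^{1/n}` exists and equals the
reciprocal of the smallest positive real root of the polynomial `1 - x - x² - … - x^k`. -/
theorem stmt9 (k : ℕ) (hk : 1 ≤ k) :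
    ∃ r : ℝ, 0 < r ∧ (1 - ∑ i ∈ Finset.Icc 1 k, r ^ i = 0) ∧
      (∀ s : ℝ, 0 < s → (1 - ∑ i ∈ Finset.Icc 1 k, s ^ i = 0) → r ≤ s) ∧
      Filter.Tendsto (fun n : ℕ => (genFib k n : ℝ) ^ ((1 : ℝ) / n))
        Filter.atTop (nhds r⁻¹) := by
  set S : ℝ → ℝ := fun x => ∑ i ∈ Finset.Icc 1 k, x ^ i with hSdef
  have hS0 : S 0 = 0 := by
    apply Finset.sum_eq_zero
    intro i hi
    exact zero_pow (by simp at hi; omega)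
  have hS1 : S 1 = k := by simp [hSdef]
  have hScont : Continuous S := by
    apply continuous_finset_sum
    intro i _
    exact continuous_pow i
  -- existence of a root in [0,1]
  have hiv : (1 : ℝ) ∈ Set.Icc (S 0) (S 1) := by
    rw [hS0, hS1]
    constructor <;> [norm_num; exact_mod_cast hk]
  obtain ⟨r, hrmem, hroot⟩ := intermediate_value_Icc (by norm_num : (0:ℝ) ≤ 1)
    (hScont.continuousOn) hiv
  have hr0 : 0 < r := by
    rcases hrmem with ⟨h0, _⟩
    rcases lt_or_eq_of_le h0 with h | h
    · exact h
    · exfalso; rw [← h] at hroot; rw [hS0] at hroot; norm_num at hroot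
  have hr1 : r ≤ 1 := hrmem.2
  -- strict monotonicity
  have hmono : ∀ a b : ℝ, 0 ≤ a → a < b → S a < S b := by
    intro a b ha hab
    apply Finset.sum_lt_sum
    · intro i hi
      exact pow_le_pow_left₀ ha hab.le i
    · exact ⟨1, Finset.mem_Icc.2 ⟨le_refl 1, hk⟩, by simpa using hab⟩
  have hroot' : ∑ i ∈ Finset.Icc 1 k, r ^ i = 1 := hroot
  refine ⟨r, hr0, by rw [hroot']; ring, ?_, ?_⟩
  · intro s hs hseq
    by_contra h
    push_neg at h
    have : S s < S r := hmono s r hs.le h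
    rw [hroot] at this
    have : S s = 1 := by linarith [sub_eq_zero.mp hseq]
    linarith
  -- the limit
  set q : ℝ := r⁻¹ with hq
  have hq1 : 1 ≤ q := one_le_inv_iff₀.2 ⟨hr0, hr1⟩
  have hq0 : 0 < q := by linarith
  have hrq : r = q⁻¹ := by rw [hq, inv_inv]
  -- key sum identity over range
  have hsum : ∑ i ∈ Finset.range k, r ^ (i + 1) = 1 := by
    have h : ∑ i ∈ Finset.Ico 1 (k+1), r ^ i = 1 := hroot'
    rw [Finset.sum_Ico_eq_sum_range] at h
    simpa [add_comm] using h
  -- q^(m-i) = q^(m+1) * r^(i+1) for i ≤ m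
  have hqpow : ∀ m i : ℕ, i ≤ m → q ^ (m - i) = q ^ (m + 1) * r ^ (i + 1) := by
    intro m i him
    have h1 : r ^ (i + 1) = (q ^ (i + 1))⁻¹ := by rw [hrq, inv_pow]
    rw [h1, ← pow_sub₀ q (ne_of_gt hq0) (by omega : i + 1 ≤ m + 1)]
    congr 1
    omega
  -- upper bound
  have hub : ∀ n, (genFib k n : ℝ) ≤ q ^ n := by
    intro n
    induction n using Nat.strong_induction_on with
    | _ n ih =>
      match n, ih with
      | 0, _ => simp [genFib]
      | m + 1, ih =>
        rw [genFib]
        push_cast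
        calc (∑ i ∈ Finset.range k, if i ≤ m then ((genFib k (m - i) : ℝ)) else 0)
            ≤ ∑ i ∈ Finset.range k, q ^ (m + 1) * r ^ (i + 1) := by
              apply Finset.sum_le_sum
              intro i _
              split
              · rw [← hqpow m i (by assumption)]
                exact ih (m - i) (Nat.lt_succ_of_le (Nat.sub_le m i))
              · positivity
          _ = q ^ (m + 1) := by
              rw [← Finset.mul_sum, hsum, mul_one]
  -- genFib ≥ 1
  have hpos : ∀ n, 1 ≤ genFib k n := by
    intro n
    induction n using Nat.strong_induction_on with
    | _ n ih =>
      match n, ih with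
      | 0, _ => simp [genFib]
      | m + 1, ih =>
        rw [genFib]
        calc 1 ≤ genFib k m := ih m (Nat.lt_succ_self m)
          _ = if 0 ≤ m then genFib k (m - 0) else 0 := by simp
          _ ≤ _ := Finset.single_le_sum (f := fun i => if i ≤ m then genFib k (m - i) else 0)
              (fun i _ => by positivity) (Finset.mem_range.2 (by omega))
  -- lower bound
  have hlb : ∀ n, q ^ n ≤ q ^ k * (genFib k n : ℝ) := by
    intro n
    induction n using Nat.strong_induction_on with
    | _ n ih =>
      by_cases hn : n < k
      · calc q ^ n ≤ q ^ k := pow_le_pow_right₀ hq1 (le_of_lt hn)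
          _ ≤ q ^ k * (genFib k n : ℝ) := by
              apply le_mul_of_one_le_right (by positivity)
              exact_mod_cast hpos n
      · push_neg at hn
        obtain ⟨m, rfl⟩ : ∃ m, n = m + 1 := ⟨n - 1, by omega⟩
        rw [genFib]
        push_cast
        have hall : ∀ i ∈ Finset.range k, i ≤ m := fun i hi => by
          have := Finset.mem_range.1 hi; omega
        calc q ^ (m + 1) = ∑ i ∈ Finset.range k, q ^ (m + 1) * r ^ (i + 1) := by
              rw [← Finset.mul_sum, hsum, mul_one]
          _ ≤ ∑ i ∈ Finset.range k, q ^ k * (if i ≤ m then ((genFib k (m - i) : ℝ)) else 0) := by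
              apply Finset.sum_le_sum
              intro i hi
              rw [← hqpow m i (hall i hi), if_pos (hall i hi)]
              exact ih (m - i) (Nat.lt_succ_of_le (Nat.sub_le m i))
          _ = q ^ k * ∑ i ∈ Finset.range k, (if i ≤ m then ((genFib k (m - i) : ℝ)) else 0) := by
              rw [Finset.mul_sum]
  -- squeeze
  have hgoal : Filter.Tendsto (fun n : ℕ => (genFib k n : ℝ) ^ ((1 : ℝ) / n))
      Filter.atTop (nhds q) := by
    have hc0 : (0:ℝ) < (q ^ k)⁻¹ := by positivity
    have htend1 : Filter.Tendsto (fun n : ℕ => ((q ^ k)⁻¹) ^ ((1 : ℝ) / n))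
        Filter.atTop (nhds 1) := by
      have := (Real.continuousAt_const_rpow (a := (q ^ k)⁻¹) (b := 0)
        (ne_of_gt hc0)).tendsto.comp tendsto_one_div_atTop_nhds_zero_nat
      simpa [Real.rpow_zero, Function.comp_def] using this
    have hlow : Filter.Tendsto (fun n : ℕ => ((q ^ k)⁻¹) ^ ((1 : ℝ) / n) * q)
        Filter.atTop (nhds q) := by
      simpa using htend1.mul_const q
    apply tendsto_of_tendsto_of_tendsto_of_le_of_le' hlow tendsto_const_nhds
    · filter_upwards [Filter.eventually_ge_atTop 1] with n hn
      have hnn : (n : ℝ) ≠ 0 := by positivity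
      have h1 : ((q ^ k)⁻¹ * q ^ n : ℝ) ≤ (genFib k n : ℝ) := by
        rw [inv_mul_le_iff₀ (by positivity)]
        exact hlb n
      have h2 : (((q ^ k)⁻¹ * q ^ n : ℝ)) ^ ((1 : ℝ) / n) ≤ (genFib k n : ℝ) ^ ((1 : ℝ) / n) :=
        Real.rpow_le_rpow (by positivity) h1 (by positivity)
      calc ((q ^ k)⁻¹) ^ ((1 : ℝ) / n) * q
          = (((q ^ k)⁻¹ * q ^ n : ℝ)) ^ ((1 : ℝ) / n) := by
            rw [Real.mul_rpow (by positivity) (by positivity)]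
            congr 1
            rw [← Real.rpow_natCast q n, ← Real.rpow_mul hq0.le]
            rw [mul_one_div, div_self hnn, Real.rpow_one]
        _ ≤ _ := h2
    · filter_upwards [Filter.eventually_ge_atTop 1] with n hn
      have hnn : (n : ℝ) ≠ 0 := by positivity
      calc (genFib k n : ℝ) ^ ((1 : ℝ) / n) ≤ (q ^ n) ^ ((1 : ℝ) / n) :=
            Real.rpow_le_rpow (by positivity) (hub n) (by positivity)
        _ = q := by
            rw [← Real.rpow_natCast q n, ← Real.rpow_mul hq0.le]
            rw [mul_one_div, div_self hnn, Real.rpow_one]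
  exact hgoal
end

section
/- Let H be a loose union of groups G_1,…,G_k acting on X_1,…,X_k. Then, after reordering, there exist j ≤ k and positive integers k_1,…,k_j with Σ k_i = k such that, as permutation groups on Y = ⊔X_i, Π_{i≤j} (H_{(Y∖X_i)}^{X_i})^{k_i} ≤ H ≤ Π_{i≤j} (G_i ≀ S_{k_i}), where the middle group H permutes the orbit of each X_i among k_i conjugate copies. -/
/-- Let `H` be a loose union of groups `G₁,…,G_k` acting on the parts
`X₁,…,X_k` of a partition of `Y`.  Then, choosing a representative of each `H`-orbit of
parts (recorded by an idempotent map `rep`, whose image has some size `j ≤ k`, the fibers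
having sizes `k_i` summing to `k`) and identifications `e i : X i ≃ X (rep i)` along the
orbit, we have `Π_{i≤j} (H_{(Y∖X_i)}^{X_i})^{k_i} ≤ H ≤ Π_{i≤j} (G_i ≀ S_{k_i})`:
every permutation of `Y` fixing each part setwise and acting on each `X i` (via the
identifications) as an element of the pointwise-stabilizer-induced group `N (rep i)`
lies in `H`; and every `h ∈ H` permutes the parts within each `rep`-fiber, acting on
each part (via the identifications) as an element of `G (rep i)`. -/
theorem stmt18 (Y : Type*) (k : ℕ) (Xs : Fin k → Set Y)
    (hdisj : Pairwise fun i j => Disjoint (Xs i) (Xs j)) (hcover : (⋃ i, Xs i) = Set.univ)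
    (H : Subgroup (Equiv.Perm Y))
    (Gs Ns : ∀ i : Fin k, Subgroup (Equiv.Perm (Xs i)))
    (hinv : ∀ h ∈ H, ∀ i : Fin k, ∃ i' : Fin k, (fun y => h y) '' Xs i = Xs i')
    (hG : ∀ (i : Fin k) (g : Equiv.Perm (Xs i)), g ∈ Gs i ↔
      ∃ h ∈ H, ((fun y => h y) '' Xs i = Xs i) ∧ ∀ x : Xs i, (g x : Y) = h x)
    (hN : ∀ (i : Fin k) (g : Equiv.Perm (Xs i)), g ∈ Ns i ↔
      ∃ h ∈ H, (∀ y ∉ Xs i, h y = y) ∧ ∀ x : Xs i, (g x : Y) = h x)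
    (hfinidx : ∀ i : Fin k, (Ns i).relIndex (Gs i) ≠ 0) :
    ∃ rep : Fin k → Fin k, (∀ i, rep (rep i) = rep i) ∧
      (∀ i, ∃ h ∈ H, (fun y => h y) '' Xs i = Xs (rep i)) ∧
      (∃ j : ℕ, j ≤ k ∧ (Finset.univ.image rep).card = j ∧
        ∑ i ∈ Finset.univ.image rep,
          (Finset.univ.filter (fun i' => rep i' = i)).card = k) ∧
      ∃ e : ∀ i : Fin k, (Xs i) ≃ (Xs (rep i)),
        (∀ f : Equiv.Perm Y,
          (∀ (i : Fin k) (y : Y), y ∈ Xs i → f y ∈ Xs i) →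
          (∀ i : Fin k, ∃ g ∈ Ns (rep i),
            ∀ x : Xs i, f (x : Y) = (((e i).symm (g (e i x)) : Xs i) : Y)) →
          f ∈ H) ∧
        (∀ h ∈ H, ∀ i : Fin k, ∃ (i' : Fin k) (hi' : rep i' = rep i),
          ((fun y => h y) '' Xs i = Xs i') ∧
          ∃ g ∈ Gs (rep i), ∀ x : Xs i,
            h (x : Y) = (((e i').symm
              (cast (congrArg (fun t => ((Xs t : Set Y) : Type _)) hi'.symm)
                (g (e i x))) : Xs i') : Y)) := by

  classical
  -- the orbit equivalence relation on parts
  set r : Fin k → Fin k → Prop := fun i i' => ∃ h ∈ H, (fun y => h y) '' Xs i = Xs i' with hrdef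
  have hrefl : ∀ i, r i i := by
    intro i
    refine ⟨1, H.one_mem, ?_⟩
    simp
  have hsymm : ∀ {i i'}, r i i' → r i' i := by
    rintro i i' ⟨h, hh, him⟩
    refine ⟨h⁻¹, H.inv_mem hh, ?_⟩
    rw [← him, ← Set.image_comp]
    have : (fun y => h⁻¹ y) ∘ (fun y => h y) = id := by
      funext y; simp
    rw [this, Set.image_id]
  have htrans : ∀ {i i' i''}, r i i' → r i' i'' → r i i'' := by
    rintro i i' i'' ⟨h, hh, him⟩ ⟨h', hh', him'⟩
    refine ⟨h' * h, H.mul_mem hh' hh, ?_⟩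
    have : (fun y => (h' * h) y) = (fun y => h' y) ∘ (fun y => h y) := by
      funext y; simp
    rw [this, Set.image_comp, him, him']
  -- rep : least element of each orbit
  have hne : ∀ i, (Finset.univ.filter (fun i' => r i i')).Nonempty :=
    fun i => ⟨i, by simp [hrefl i]⟩
  set rep : Fin k → Fin k := fun i => (Finset.univ.filter (fun i' => r i i')).min' (hne i)
    with hrepdef
  have hrep_r : ∀ i, r i (rep i) := by
    intro i
    have := Finset.min'_mem _ (hne i)
    simpa using this
  have hrep_eq : ∀ i i', r i i' → rep i = rep i' := by
    intro i i' hri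
    have hfe : (Finset.univ.filter (fun j => r i j)) = (Finset.univ.filter (fun j => r i' j)) := by
      ext j
      simp only [Finset.mem_filter, Finset.mem_univ, true_and]
      exact ⟨fun h => htrans (hsymm hri) h, fun h => htrans hri h⟩
    simp only [hrepdef]
    congr 1
  have hrep_idem : ∀ i, rep (rep i) = rep i := fun i => (hrep_eq i (rep i) (hrep_r i)).symm
  -- choose a group element realizing i ↦ rep i
  choose σ hσH hσim using hrep_r
  -- basic membership facts
  have huniq : ∀ {y : Y} {i j : Fin k}, y ∈ Xs i → y ∈ Xs j → i = j := by
    intro y i j hi hj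
    by_contra hij
    exact Set.disjoint_left.mp (hdisj hij) hi hj
  have hpart : ∀ y : Y, ∃ i, y ∈ Xs i := by
    intro y
    have : y ∈ ⋃ i, Xs i := hcover ▸ Set.mem_univ y
    simpa using this
  have himem : ∀ (h : Equiv.Perm Y) (i i' : Fin k), ((fun y => h y) '' Xs i = Xs i') →
      ∀ y, y ∈ Xs i ↔ h y ∈ Xs i' := by
    intro h i i' him y
    constructor
    · intro hy; rw [← him]; exact ⟨y, hy, rfl⟩
    · intro hy; rw [← him] at hy
      obtain ⟨x, hx, hxe⟩ := hy
      rwa [← h.injective hxe]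
  have himeq : ∀ (h : Equiv.Perm Y) (i i' : Fin k), (∀ y, y ∈ Xs i ↔ h y ∈ Xs i') →
      (fun y => h y) '' Xs i = Xs i' := by
    intro h i i' hiff
    ext y
    simp only [Set.mem_image]
    constructor
    · rintro ⟨x, hx, rfl⟩; exact (hiff x).mp hx
    · intro hy
      exact ⟨h⁻¹ y, (hiff _).mpr (by simpa using hy), by simp⟩
  have hmem : ∀ (i : Fin k) (y : Y), y ∈ Xs i ↔ σ i y ∈ Xs (rep i) :=
    fun i => himem (σ i) i (rep i) (hσim i)
  -- the identifications
  refine ⟨rep, hrep_idem, fun i => ⟨σ i, hσH i, hσim i⟩, ?_, ?_⟩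
  · -- cardinalities
    refine ⟨(Finset.univ.image rep).card, ?_, rfl, ?_⟩
    · calc (Finset.univ.image rep).card ≤ (Finset.univ : Finset (Fin k)).card :=
            Finset.card_image_le
        _ = k := by simp
    · have := Finset.card_eq_sum_card_fiberwise
        (f := rep) (s := Finset.univ) (t := Finset.univ.image rep)
        (fun x _ => Finset.mem_image_of_mem rep (Finset.mem_univ x))
      rw [← this]
      simp
  · refine ⟨fun i =>
      ⟨fun x => ⟨σ i x, (hmem i x).mp x.2⟩,
       fun z => ⟨(σ i)⁻¹ z, (hmem i _).mpr (by simpa using z.2)⟩,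
       fun x => by simp,
       fun z => by simp⟩, ?_, ?_⟩
    · -- lower bound: product of point stabilizers is in H
      intro f hfix hg
      choose g hgN hgf using hg
      choose t htH htfix htag using fun i => (hN (rep i) (g i)).mp (hgN i)
      set p : Fin k → Equiv.Perm Y := fun i => (σ i)⁻¹ * t i * σ i with hpdef
      have hpH : ∀ i, p i ∈ H := fun i =>
        H.mul_mem (H.mul_mem (H.inv_mem (hσH i)) (htH i)) (hσH i)
      have hp_out : ∀ (i : Fin k) (y : Y), y ∉ Xs i → p i y = y := by
        intro i y hy
        have h1 : σ i y ∉ Xs (rep i) := fun h => hy ((hmem i y).mpr h)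
        simp only [hpdef, Equiv.Perm.mul_apply]
        rw [htfix i _ h1]
        simp
      have hp_in : ∀ (i : Fin k) (y : Y) (hy : y ∈ Xs i), p i y = f y := by
        intro i y hy
        have h2 := htag i ⟨σ i y, (hmem i y).mp hy⟩
        simp only [hpdef, Equiv.Perm.mul_apply]
        rw [← h2]
        have h3 := hgf i ⟨y, hy⟩
        rw [h3]
        rfl
      have key : ∀ s : Finset (Fin k), ∃ q ∈ H,
          (∀ j ∈ s, ∀ y ∈ Xs j, q y = f y) ∧ (∀ y : Y, (∀ j ∈ s, y ∉ Xs j) → q y = y) := by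
        intro s
        induction s using Finset.induction_on with
        | empty => exact ⟨1, H.one_mem, by simp, by simp⟩
        | @insert a s ha ih =>
          obtain ⟨q, hqH, hq1, hq2⟩ := ih
          refine ⟨p a * q, H.mul_mem (hpH a) hqH, ?_, ?_⟩
          · intro j hj y hy
            rcases Finset.mem_insert.mp hj with rfl | hjs
            · have hqy : q y = y := hq2 y (fun j' hj' hy' => ha (huniq hy hy' ▸ hj'))
              simp only [Equiv.Perm.mul_apply, hqy]
              exact hp_in j y hy
            · have hqy : q y = f y := hq1 j hjs y hy
              have hfy : f y ∈ Xs j := hfix j y hy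
              have hja : j ≠ a := fun h => ha (h ▸ hjs)
              have : f y ∉ Xs a := fun h => hja (huniq hfy h)
              simp only [Equiv.Perm.mul_apply, hqy]
              exact hp_out a _ this
          · intro y hy
            have hqy : q y = y := hq2 y (fun j hj => hy j (Finset.mem_insert_of_mem hj))
            simp only [Equiv.Perm.mul_apply, hqy]
            exact hp_out a y (hy a (Finset.mem_insert_self a s))
      obtain ⟨q, hqH, hq1, _⟩ := key Finset.univ
      have : f = q := by
        apply Equiv.ext
        intro y
        obtain ⟨i, hi⟩ := hpart y
        exact (hq1 i (Finset.mem_univ i) y hi).symm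
      rw [this]
      exact hqH
    · -- upper bound
      intro h hh i
      obtain ⟨i', him'⟩ := hinv h hh i
      have hri : r i i' := ⟨h, hh, him'⟩
      have hi' : rep i' = rep i := (hrep_eq i i' hri).symm
      refine ⟨i', hi', him', ?_⟩
      set h' : Equiv.Perm Y := σ i' * h * (σ i)⁻¹ with hh'def
      have hh'H : H.carrier h' := H.mul_mem (H.mul_mem (hσH i') hh) (H.inv_mem (hσH i))
      have hiff : ∀ y, y ∈ Xs (rep i) ↔ h' y ∈ Xs (rep i) := by
        intro y
        have e1 : y ∈ Xs (rep i) ↔ (σ i)⁻¹ y ∈ Xs i := by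
          rw [hmem i ((σ i)⁻¹ y)]
          simp
        have e2 : (σ i)⁻¹ y ∈ Xs i ↔ h ((σ i)⁻¹ y) ∈ Xs i' := himem h i i' him' _
        have e3 : h ((σ i)⁻¹ y) ∈ Xs i' ↔ σ i' (h ((σ i)⁻¹ y)) ∈ Xs (rep i) := by
          rw [hmem i' (h ((σ i)⁻¹ y)), hi']
        rw [e1, e2, e3]
        simp [hh'def]
      have him'' : (fun y => h' y) '' Xs (rep i) = Xs (rep i) := himeq h' _ _ hiff
      set g : Equiv.Perm (Xs (rep i)) :=
        ⟨fun x => ⟨h' x, (hiff x).mp x.2⟩,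
         fun z => ⟨h'⁻¹ z, by
            have := (hiff (h'⁻¹ z)).mpr (by simpa using z.2)
            exact this⟩,
         fun x => by simp,
         fun z => by simp⟩ with hgdef
      have hgG : g ∈ Gs (rep i) := by
        rw [hG]
        exact ⟨h', hh'H, him'', fun x => rfl⟩
      refine ⟨g, hgG, ?_⟩
      intro x
      have hcast : ∀ (a b : Fin k) (hab : a = b) (z : (Xs b : Set Y)),
          ((cast (congrArg (fun t => ((Xs t : Set Y) : Type _)) hab.symm) z : Xs a) : Y)
            = (z : Y) := by
        rintro a b rfl z
        rfl
      have h4 := hcast (rep i') (rep i) hi' (g ⟨σ i x, (hmem i x).mp x.2⟩)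
      -- goal:  h ↑x = ↑((e i').symm (cast _ (g (e i x))))
      show (h x : Y) = (σ i')⁻¹ ((cast (congrArg (fun t => ((Xs t : Set Y) : Type _)) hi'.symm)
        (g ⟨σ i x, (hmem i x).mp x.2⟩) : (Xs (rep i') : Set Y)) : Y)
      rw [h4]
      show (h x : Y) = (σ i')⁻¹ (h' (σ i x))
      simp [hh'def]
end
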